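/- Let r ∈ ℝ with r ≠ 0. There is a 5-dimensional real Lie algebra 𝔤 with basis e₁,...,e₅ and dual basis e¹,...,e⁵ whose Chevalley–Eilenberg differentials satisfy (writing e^{ij} for eⁱ∧eʲ): de¹ = 0, de² = r e^{12} + 3r e^{34} + 3r² e^{35}, de³ = r e^{13} − 3r e^{24} − 3r² e^{25}, de⁴ = 2r e^{14} + 2r e^{23}, de⁵ = −2e^{14} − 2e^{23} (i.e., the bracket determined by these equations satisfies the Jacobi identity). Moreover, 𝔤 is solvable, the quadruplet η = e⁵, ω₁ = e^{12} + e^{34}, ω₂ = e^{13} − e^{24}, ω₃ = e^{14} + e^{23} is a hypo-contact structure on 𝔤, and 𝔤 is isomorphic to 𝔥₃. -/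

import Mathlib

noncomputable section

/-- Chevalley–Eilenberg differential of a 1-form on a Lie algebra. -/
def dOne {V : Type*} [LieRing V] [LieAlgebra ℝ V] (α : V → ℝ) (x y : V) : ℝ :=
  -α ⁅x, y⁆

/-- Chevalley–Eilenberg differential of a 2-form on a Lie algebra. -/
def dTwo {V : Type*} [LieRing V] [LieAlgebra ℝ V] (ω : V → V → ℝ) (x y z : V) : ℝ :=
  -ω ⁅x, y⁆ z + ω ⁅x, z⁆ y - ω ⁅y, z⁆ x

/-- Chevalley–Eilenberg differential of a 3-form on a Lie algebra. -/
def dThree {V : Type*} [LieRing V] [LieAlgebra ℝ V] (σ : V → V → V → ℝ)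
    (x y z w : V) : ℝ :=
  -σ ⁅x, y⁆ z w + σ ⁅x, z⁆ y w - σ ⁅x, w⁆ y z
    - σ ⁅y, z⁆ x w + σ ⁅y, w⁆ x z - σ ⁅z, w⁆ x y

/-- Wedge product of two 1-forms, as an alternating bilinear map. -/
def wedge1 {V : Type*} [LieRing V] [LieAlgebra ℝ V] (α β : V →ₗ[ℝ] ℝ) :
    V →ₗ[ℝ] V →ₗ[ℝ] ℝ :=
  LinearMap.mk₂ ℝ (fun x y => α x * β y - α y * β x)
    (fun m₁ m₂ n => by simp [map_add]; ring)
    (fun c m n => by simp [map_smul, smul_eq_mul]; ring)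
    (fun m n₁ n₂ => by simp [map_add]; ring)
    (fun c m n => by simp [map_smul, smul_eq_mul]; ring)

/-- Wedge product of a 1-form and a 2-form. -/
def wedge12 {V : Type*} (α : V → ℝ) (ω : V → V → ℝ) (x y z : V) : ℝ :=
  α x * ω y z - α y * ω x z + α z * ω x y

/-- Wedge product of two 2-forms. -/
def wedge22 {V : Type*} (ω τ : V → V → ℝ) (x y z w : V) : ℝ :=
  ω x y * τ z w - ω x z * τ y w + ω x w * τ y z
    + ω y z * τ x w - ω y w * τ x z + ω z w * τ x y

/-- Wedge product of a 4-form and a 1-form. -/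
def wedge41 {V : Type*} (v : V → V → V → V → ℝ) (α : V → ℝ)
    (x₀ x₁ x₂ x₃ x₄ : V) : ℝ :=
  α x₀ * v x₁ x₂ x₃ x₄ - α x₁ * v x₀ x₂ x₃ x₄ + α x₂ * v x₀ x₁ x₃ x₄
    - α x₃ * v x₀ x₁ x₂ x₄ + α x₄ * v x₀ x₁ x₂ x₃

/-- An SU(2)-structure on a 5-dimensional real Lie algebra. -/
structure IsSU2Structure {V : Type*} [LieRing V] [LieAlgebra ℝ V]
    (η : V →ₗ[ℝ] ℝ) (ω₁ ω₂ ω₃ : V →ₗ[ℝ] V →ₗ[ℝ] ℝ) : Prop where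
  alt1 : ∀ x, ω₁ x x = 0
  alt2 : ∀ x, ω₂ x x = 0
  alt3 : ∀ x, ω₃ x x = 0
  vol : ∃ v : V → V → V → V → ℝ,
    wedge22 (fun a b => ω₁ a b) (fun a b => ω₁ a b) = v ∧
    wedge22 (fun a b => ω₂ a b) (fun a b => ω₂ a b) = v ∧
    wedge22 (fun a b => ω₃ a b) (fun a b => ω₃ a b) = v ∧
    wedge22 (fun a b => ω₁ a b) (fun a b => ω₂ a b) = (fun _ _ _ _ => 0) ∧
    wedge22 (fun a b => ω₁ a b) (fun a b => ω₃ a b) = (fun _ _ _ _ => 0) ∧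
    wedge22 (fun a b => ω₂ a b) (fun a b => ω₃ a b) = (fun _ _ _ _ => 0) ∧
    wedge41 v (fun x => η x) ≠ (fun _ _ _ _ _ => 0)
  compat : ∀ X Y : V, (∀ z, ω₃ X z = ω₁ Y z) → 0 ≤ ω₂ X Y

/-- A hypo-contact structure on a 5-dimensional real Lie algebra. -/
structure IsHypoContact {V : Type*} [LieRing V] [LieAlgebra ℝ V]
    (η : V →ₗ[ℝ] ℝ) (ω₁ ω₂ ω₃ : V →ₗ[ℝ] V →ₗ[ℝ] ℝ)
    extends IsSU2Structure η ω₁ ω₂ ω₃ : Prop where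
  contact : ∀ x y, dOne (fun z => η z) x y = -2 * ω₃ x y
  closed1 : ∀ x y z w, dThree (wedge12 (fun z => η z) (fun a b => ω₁ a b)) x y z w = 0
  closed2 : ∀ x y z w, dThree (wedge12 (fun z => η z) (fun a b => ω₂ a b)) x y z w = 0

/-- The Lie algebra `𝔥₁`. -/
def IsH1 (V : Type*) [LieRing V] [LieAlgebra ℝ V] : Prop :=
  ∃ X : Module.Basis (Fin 5) ℝ V,
    ⁅X 0, X 1⁆ = 0 ∧ ⁅X 0, X 2⁆ = 0 ∧ ⁅X 0, X 3⁆ = X 4 ∧ ⁅X 0, X 4⁆ = 0 ∧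
    ⁅X 1, X 2⁆ = X 4 ∧ ⁅X 1, X 3⁆ = 0 ∧ ⁅X 1, X 4⁆ = 0 ∧
    ⁅X 2, X 3⁆ = 0 ∧ ⁅X 2, X 4⁆ = 0 ∧ ⁅X 3, X 4⁆ = 0

/-- The Lie algebra `𝔥₂`. -/
def IsH2 (V : Type*) [LieRing V] [LieAlgebra ℝ V] : Prop :=
  ∃ X : Module.Basis (Fin 5) ℝ V,
    ⁅X 0, X 1⁆ = 0 ∧ ⁅X 0, X 2⁆ = 0 ∧ ⁅X 0, X 3⁆ = 0 ∧ ⁅X 0, X 4⁆ = (2 : ℝ) • X 0 ∧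
    ⁅X 1, X 2⁆ = X 0 ∧ ⁅X 1, X 3⁆ = 0 ∧ ⁅X 1, X 4⁆ = X 1 ∧
    ⁅X 2, X 3⁆ = 0 ∧ ⁅X 2, X 4⁆ = X 2 ∧ ⁅X 3, X 4⁆ = (-3 : ℝ) • X 3

/-- The Lie algebra `𝔥₃`. -/
def IsH3 (V : Type*) [LieRing V] [LieAlgebra ℝ V] : Prop :=
  ∃ X : Module.Basis (Fin 5) ℝ V,
    ⁅X 0, X 1⁆ = 0 ∧ ⁅X 0, X 2⁆ = 0 ∧ ⁅X 0, X 3⁆ = (2 : ℝ) • X 0 ∧ ⁅X 0, X 4⁆ = 0 ∧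
    ⁅X 1, X 2⁆ = X 0 ∧ ⁅X 1, X 3⁆ = X 1 ∧ ⁅X 1, X 4⁆ = -X 2 ∧
    ⁅X 2, X 3⁆ = X 2 ∧ ⁅X 2, X 4⁆ = X 1 ∧ ⁅X 3, X 4⁆ = 0

/-- The Lie algebra `𝔥₄`. -/
def IsH4 (V : Type*) [LieRing V] [LieAlgebra ℝ V] : Prop :=
  ∃ X : Module.Basis (Fin 5) ℝ V,
    ⁅X 0, X 1⁆ = 0 ∧ ⁅X 0, X 2⁆ = 0 ∧ ⁅X 0, X 3⁆ = X 0 ∧ ⁅X 0, X 4⁆ = 0 ∧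
    ⁅X 1, X 2⁆ = 0 ∧ ⁅X 1, X 3⁆ = 0 ∧ ⁅X 1, X 4⁆ = X 1 ∧
    ⁅X 2, X 3⁆ = -X 2 ∧ ⁅X 2, X 4⁆ = -X 2 ∧ ⁅X 3, X 4⁆ = 0

/-- The Lie algebra `𝔥₅`. -/
def IsH5 (V : Type*) [LieRing V] [LieAlgebra ℝ V] : Prop :=
  ∃ X : Module.Basis (Fin 5) ℝ V,
    ⁅X 0, X 1⁆ = 0 ∧ ⁅X 0, X 2⁆ = 0 ∧ ⁅X 0, X 3⁆ = 0 ∧ ⁅X 0, X 4⁆ = X 0 ∧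
    ⁅X 1, X 2⁆ = 0 ∧ ⁅X 1, X 3⁆ = X 0 ∧ ⁅X 1, X 4⁆ = 0 ∧
    ⁅X 2, X 3⁆ = X 1 ∧ ⁅X 2, X 4⁆ = -X 2 ∧ ⁅X 3, X 4⁆ = X 3

/-- `e^{ij}`, the wedge of the `i`-th and `j`-th dual basis 1-forms. -/
def bw {V : Type*} [LieRing V] [LieAlgebra ℝ V] (e : Module.Basis (Fin 5) ℝ V) (i j : Fin 5) :
    V →ₗ[ℝ] V →ₗ[ℝ] ℝ :=
  wedge1 (e.coord i) (e.coord j)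

/-- The content of Statement 4: structure equations, solvability, hypo-contact structure
and the isomorphism type, for a Lie algebra `V`. -/
def GoodLieAlgebra4 (r : ℝ) (V : Type) [LieRing V] [LieAlgebra ℝ V] : Prop :=
  LieAlgebra.IsSolvable V ∧
  ∃ e : Module.Basis (Fin 5) ℝ V,
      (∀ x y : _, dOne (⇑(e.coord 0)) x y = 0) ∧
      (∀ x y : _, dOne (⇑(e.coord 1)) x y = (r) * bw e 0 1 x y + (3*r) * bw e 2 3 x y + (3*r^2) * bw e 2 4 x y) ∧
      (∀ x y : _, dOne (⇑(e.coord 2)) x y = (r) * bw e 0 2 x y + (-3*r) * bw e 1 3 x y + (-3*r^2) * bw e 1 4 x y) ∧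
      (∀ x y : _, dOne (⇑(e.coord 3)) x y = (2*r) * bw e 0 3 x y + (2*r) * bw e 1 2 x y) ∧
      (∀ x y : _, dOne (⇑(e.coord 4)) x y = (-2) * bw e 0 3 x y + (-2) * bw e 1 2 x y) ∧
      IsHypoContact (e.coord 4) (bw e 0 1 + bw e 2 3) (bw e 0 2 - bw e 1 3) (bw e 0 3 + bw e 1 2) ∧
      IsH3 V



def L (r : ℝ) : Type := Fin 5 → ℝ

instance (r : ℝ) : AddCommGroup (L r) := inferInstanceAs (AddCommGroup (Fin 5 → ℝ))
instance (r : ℝ) : Module ℝ (L r) := inferInstanceAs (Module ℝ (Fin 5 → ℝ))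

def brk (r : ℝ) (x y : L r) : L r :=
  ![0,
    -(r*(x 0*y 1 - x 1*y 0) + 3*r*(x 2*y 3 - x 3*y 2) + 3*r^2*(x 2*y 4 - x 4*y 2)),
    -(r*(x 0*y 2 - x 2*y 0) - 3*r*(x 1*y 3 - x 3*y 1) - 3*r^2*(x 1*y 4 - x 4*y 1)),
    -(2*r*(x 0*y 3 - x 3*y 0) + 2*r*(x 1*y 2 - x 2*y 1)),
    2*(x 0*y 3 - x 3*y 0) + 2*(x 1*y 2 - x 2*y 1)]

@[simp] lemma brk0 (r : ℝ) (x y : L r) : brk r x y 0 = 0 := rfl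
@[simp] lemma brk1 (r : ℝ) (x y : L r) : brk r x y 1 =
    -(r*(x 0*y 1 - x 1*y 0) + 3*r*(x 2*y 3 - x 3*y 2) + 3*r^2*(x 2*y 4 - x 4*y 2)) := rfl
@[simp] lemma brk2 (r : ℝ) (x y : L r) : brk r x y 2 =
    -(r*(x 0*y 2 - x 2*y 0) - 3*r*(x 1*y 3 - x 3*y 1) - 3*r^2*(x 1*y 4 - x 4*y 1)) := rfl
@[simp] lemma brk3 (r : ℝ) (x y : L r) : brk r x y 3 =
    -(2*r*(x 0*y 3 - x 3*y 0) + 2*r*(x 1*y 2 - x 2*y 1)) := rfl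
@[simp] lemma brk4 (r : ℝ) (x y : L r) : brk r x y 4 =
    2*(x 0*y 3 - x 3*y 0) + 2*(x 1*y 2 - x 2*y 1) := rfl

@[simp] lemma L.add_apply {r : ℝ} (x y : L r) (i : Fin 5) : (x + y) i = x i + y i := rfl
@[simp] lemma L.smul_apply {r : ℝ} (c : ℝ) (x : L r) (i : Fin 5) : (c • x) i = c * x i := rfl
@[simp] lemma L.neg_apply {r : ℝ} (x : L r) (i : Fin 5) : (-x) i = -(x i) := rfl
@[simp] lemma L.zero_apply {r : ℝ} (i : Fin 5) : (0 : L r) i = 0 := rfl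

lemma Lext {r : ℝ} {x y : L r} (h : ∀ i, x i = y i) : x = y := funext h

instance (r : ℝ) : LieRing (L r) where
  bracket := brk r
  add_lie x y z := by apply Lext; intro i; rw [L.add_apply]; fin_cases i <;> simp [brk] <;> ring
  lie_add x y z := by apply Lext; intro i; rw [L.add_apply]; fin_cases i <;> simp [brk] <;> ring
  lie_self x := by apply Lext; intro i; fin_cases i <;> simp [brk] <;> ring
  leibniz_lie x y z := by apply Lext; intro i; rw [L.add_apply]; fin_cases i <;> simp [brk] <;> ring

instance (r : ℝ) : LieAlgebra ℝ (L r) where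
  lie_smul c x y := by
    have h : ∀ a b : L r, ⁅a, b⁆ = brk r a b := fun _ _ => rfl
    apply Lext; intro i; rw [L.smul_apply]; fin_cases i <;> simp [h, brk] <;> ring

@[simp] lemma L.lie_apply {r : ℝ} (x y : L r) : ⁅x, y⁆ = brk r x y := rfl
def eB (r : ℝ) : Module.Basis (Fin 5) ℝ (L r) := Pi.basisFun ℝ (Fin 5)

@[simp] lemma eB_coord (r : ℝ) (i : Fin 5) (x : L r) : (eB r).coord i x = x i := by
  rw [Module.Basis.coord_apply]; exact Pi.basisFun_repr ℝ (Fin 5) x i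

@[simp] lemma eB_repr (r : ℝ) (x : L r) (i : Fin 5) : (eB r).repr x i = x i :=
  Pi.basisFun_repr ℝ (Fin 5) x i

lemma eB_apply (r : ℝ) (i : Fin 5) : eB r i = (Pi.single i 1 : Fin 5 → ℝ) :=
  Pi.basisFun_apply ℝ (Fin 5) i

@[simp] lemma eB_apply_apply (r : ℝ) (i j : Fin 5) : (eB r i) j = if j = i then 1 else 0 := by
  rw [eB_apply]; exact Pi.single_apply i 1 j

example (r : ℝ) (x y : L r) : dOne (⇑((eB r).coord 0)) x y = 0 := by
  simp [dOne]

example (r : ℝ) (x y : L r) : dOne (⇑((eB r).coord 1)) x y =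
    (r) * bw (eB r) 0 1 x y + (3*r) * bw (eB r) 2 3 x y + (3*r^2) * bw (eB r) 2 4 x y := by
  simp [dOne, bw, wedge1]; ring

/-! ### Solvability -/

def I1 (r : ℝ) : LieIdeal ℝ (L r) where
  carrier := {x : L r | x 0 = 0}
  add_mem' := by intro a b ha hb; show (a + b) 0 = 0; rw [L.add_apply, ha, hb]; ring
  zero_mem' := rfl
  smul_mem' := by intro c a ha; show (c • a) 0 = 0; rw [L.smul_apply, ha]; ring
  lie_mem := by intro x m _; show brk r x m 0 = 0; simp

lemma mem_I1 {r : ℝ} {x : L r} : x ∈ I1 r ↔ x 0 = 0 := Iff.rfl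

def I2 (r : ℝ) : LieIdeal ℝ (L r) where
  carrier := {x : L r | x 0 = 0 ∧ x 3 + r * x 4 = 0}
  add_mem' := by
    intro a b ha hb
    refine ⟨?_, ?_⟩ <;> simp only [L.add_apply]
    · linear_combination ha.1 + hb.1
    · linear_combination ha.2 + hb.2
  zero_mem' := by constructor <;> simp
  smul_mem' := by
    intro c a ha
    refine ⟨?_, ?_⟩ <;> simp only [L.smul_apply]
    · linear_combination c * ha.1
    · linear_combination c * ha.2
  lie_mem := by
    intro x m _
    constructor
    · show brk r x m 0 = 0; simp
    · show brk r x m 3 + r * brk r x m 4 = 0; simp; ring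

lemma mem_I2 {r : ℝ} {x : L r} : x ∈ I2 r ↔ x 0 = 0 ∧ x 3 + r * x 4 = 0 := Iff.rfl

def I3 (r : ℝ) : LieIdeal ℝ (L r) where
  carrier := {x : L r | x 0 = 0 ∧ x 1 = 0 ∧ x 2 = 0 ∧ x 3 + r * x 4 = 0}
  add_mem' := by
    intro a b ha hb
    obtain ⟨h1, h2, h3, h4⟩ := ha; obtain ⟨g1, g2, g3, g4⟩ := hb
    refine ⟨?_, ?_, ?_, ?_⟩ <;> simp only [L.add_apply]
    · linear_combination h1 + g1
    · linear_combination h2 + g2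
    · linear_combination h3 + g3
    · linear_combination h4 + g4
  zero_mem' := by refine ⟨?_, ?_, ?_, ?_⟩ <;> simp
  smul_mem' := by
    intro c a ha
    obtain ⟨h1, h2, h3, h4⟩ := ha
    refine ⟨?_, ?_, ?_, ?_⟩ <;> simp only [L.smul_apply]
    · linear_combination c * h1
    · linear_combination c * h2
    · linear_combination c * h3
    · linear_combination c * h4
  lie_mem := by
    intro x m hm
    obtain ⟨h1, h2, h3, h4⟩ := hm
    have h5 : m 3 = -(r * m 4) := by linarith
    refine ⟨?_, ?_, ?_, ?_⟩
    · show brk r x m 0 = 0; simp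
    · show brk r x m 1 = 0; simp [h1, h2, h3, h5]; ring
    · show brk r x m 2 = 0; simp [h1, h2, h3, h5]; ring
    · show brk r x m 3 + r * brk r x m 4 = 0; simp; ring

lemma mem_I3 {r : ℝ} {x : L r} :
    x ∈ I3 r ↔ x 0 = 0 ∧ x 1 = 0 ∧ x 2 = 0 ∧ x 3 + r * x 4 = 0 := Iff.rfl

lemma solv (r : ℝ) : LieAlgebra.IsSolvable (L r) := by
  refine (LieAlgebra.isSolvable_iff ℝ (L r)).mpr ⟨4, le_bot_iff.mp ?_⟩
  have hT : ⁅(⊤ : LieIdeal ℝ (L r)), (⊤ : LieIdeal ℝ (L r))⁆ ≤ I1 r := by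
    rw [LieSubmodule.lie_le_iff]
    intro a _ b _
    show brk r a b 0 = 0; simp
  have h12 : ⁅I1 r, I1 r⁆ ≤ I2 r := by
    rw [LieSubmodule.lie_le_iff]
    intro a ha b hb
    rw [mem_I1] at ha hb
    refine mem_I2.mpr ⟨?_, ?_⟩
    · show brk r a b 0 = 0; simp
    · show brk r a b 3 + r * brk r a b 4 = 0; simp; ring
  have h23 : ⁅I2 r, I2 r⁆ ≤ I3 r := by
    rw [LieSubmodule.lie_le_iff]
    intro a ha b hb
    obtain ⟨ha1, ha2⟩ := mem_I2.mp ha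
    obtain ⟨hb1, hb2⟩ := mem_I2.mp hb
    have ha3 : a 3 = -(r * a 4) := by linarith
    have hb3 : b 3 = -(r * b 4) := by linarith
    refine mem_I3.mpr ⟨?_, ?_, ?_, ?_⟩
    · show brk r a b 0 = 0; simp
    · show brk r a b 1 = 0; simp [ha1, hb1, ha3, hb3]; ring
    · show brk r a b 2 = 0; simp [ha1, hb1, ha3, hb3]; ring
    · show brk r a b 3 + r * brk r a b 4 = 0; simp; ring
  have h30 : ⁅I3 r, I3 r⁆ ≤ ⊥ := by
    rw [LieSubmodule.lie_le_iff]
    intro a ha b hb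
    obtain ⟨ha1, ha2, ha3, ha4⟩ := mem_I3.mp ha
    obtain ⟨hb1, hb2, hb3, hb4⟩ := mem_I3.mp hb
    rw [LieSubmodule.mem_bot]
    apply Lext; intro i; fin_cases i <;>
      simp [ha1, ha2, ha3, hb1, hb2, hb3] <;> ring
  have key : ∀ k : ℕ, LieAlgebra.derivedSeries ℝ (L r) (k + 1) =
      ⁅LieAlgebra.derivedSeries ℝ (L r) k, LieAlgebra.derivedSeries ℝ (L r) k⁆ := fun k => by
    rw [LieAlgebra.derivedSeries_def, LieAlgebra.derivedSeriesOfIdeal_succ]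
  have d1 : LieAlgebra.derivedSeries ℝ (L r) 1 ≤ I1 r := by
    have := key 0
    rw [show (1 : ℕ) = 0 + 1 from rfl, this]
    simpa using hT
  have d2 : LieAlgebra.derivedSeries ℝ (L r) 2 ≤ I2 r := by
    rw [show (2 : ℕ) = 1 + 1 from rfl, key 1]
    exact le_trans (LieSubmodule.mono_lie d1 d1) h12
  have d3 : LieAlgebra.derivedSeries ℝ (L r) 3 ≤ I3 r := by
    rw [show (3 : ℕ) = 2 + 1 from rfl, key 2]
    exact le_trans (LieSubmodule.mono_lie d2 d2) h23
  rw [show (4 : ℕ) = 3 + 1 from rfl, key 3]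
  exact le_trans (LieSubmodule.mono_lie d3 d3) h30

/-! ### Hypo-contact -/

lemma hypo (r : ℝ) : IsHypoContact ((eB r).coord 4)
    (bw (eB r) 0 1 + bw (eB r) 2 3) (bw (eB r) 0 2 - bw (eB r) 1 3)
    (bw (eB r) 0 3 + bw (eB r) 1 2) := by
  refine { alt1 := ?_, alt2 := ?_, alt3 := ?_, vol := ?_, compat := ?_,
           contact := ?_, closed1 := ?_, closed2 := ?_ }
  · intro x; simp [bw, wedge1]
  · intro x; simp [bw, wedge1]
  · intro x; simp [bw, wedge1]
  · refine ⟨_, rfl, ?_, ?_, ?_, ?_, ?_, ?_⟩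
    · funext x y z w; simp [wedge22, bw, wedge1]; ring
    · funext x y z w; simp [wedge22, bw, wedge1]; ring
    · funext x y z w; simp [wedge22, bw, wedge1]; ring
    · funext x y z w; simp [wedge22, bw, wedge1]; ring
    · funext x y z w; simp [wedge22, bw, wedge1]; ring
    · intro h
      have h3 := congrFun (congrFun (congrFun (congrFun (congrFun h
        (eB r 4)) (eB r 0)) (eB r 1)) (eB r 2)) (eB r 3)
      simp only [wedge41, wedge22] at h3
      simp [bw, wedge1] at h3
  · intro X Y h
    have h0 := h (eB r 0)
    have h1 := h (eB r 1)
    have h2 := h (eB r 2)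
    have h3 := h (eB r 3)
    simp [bw, wedge1] at h0 h1 h2 h3
    have goal_eq : ((bw (eB r) 0 2 - bw (eB r) 1 3) X) Y =
        Y 2 ^ 2 + Y 0 ^ 2 + Y 1 ^ 2 + Y 3 ^ 2 := by
      simp [bw, wedge1]
      linear_combination (Y 2) * h3 + (Y 0) * h1 + (Y 1) * h0 - (Y 3) * h2
    rw [goal_eq]; positivity
  · intro x y; simp [dOne, bw, wedge1]; ring
  · intro x y z w; simp [dThree, wedge12, bw, wedge1]; ring
  · intro x y z w; simp [dThree, wedge12, bw, wedge1]; ring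

/-! ### Isomorphism with h3 -/

def fEq (r : ℝ) (hr : r ≠ 0) : L r ≃ₗ[ℝ] L r where
  toFun x := ![x 3 / r, x 1, x 2, -(2*r) * x 0, 2 * x 0 - x 4 / (3*r^2)]
  map_add' a b := by apply Lext; intro i; show _ = (_ : ℝ) + (_ : ℝ); fin_cases i <;> simp <;> ring
  map_smul' c a := by apply Lext; intro i; show _ = (_ : ℝ) • (_ : ℝ); fin_cases i <;> simp <;> ring
  invFun y := ![-(y 3) / (2*r), y 1, y 2, r * y 0, -(3*r) * y 3 - (3*r^2) * y 4]
  left_inv x := by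
    apply Lext; intro i; fin_cases i <;> simp <;> field_simp <;> ring
  right_inv y := by
    apply Lext; intro i; fin_cases i <;> simp <;> field_simp <;> ring

@[simp] lemma fEq_apply (r : ℝ) (hr : r ≠ 0) (x : L r) (i : Fin 5) :
    fEq r hr x i = ![x 3 / r, x 1, x 2, -(2*r) * x 0, 2 * x 0 - x 4 / (3*r^2)] i := rfl

lemma isH3 (r : ℝ) (hr : r ≠ 0) : IsH3 (L r) := by
  refine ⟨(eB r).map (fEq r hr), ?_, ?_, ?_, ?_, ?_, ?_, ?_, ?_, ?_, ?_⟩ <;>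
  · apply Lext; intro k
    simp only [Module.Basis.map_apply]
    fin_cases k <;>
      (try simp [fEq_apply, eB_apply_apply, Pi.single_apply, brk]
       all_goals try field_simp
       all_goals try ring)

theorem exists_good_lie_algebra4 (r : ℝ) (hr : r ≠ 0) :
    ∃ (V : Type) (i₁ : LieRing V) (i₂ : @LieAlgebra ℝ V _ i₁),
      @GoodLieAlgebra4 r V i₁ i₂ := by
  refine ⟨L r, inferInstance, inferInstance, solv r, eB r, ?_, ?_, ?_, ?_, ?_, hypo r, isH3 r hr⟩ <;>
  · intro x y
    simp [dOne, bw, wedge1]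
    try ring

end
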